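/- There is no sequence of sets f : ℕ → ZFSet and values b : ℕ → ZFSet such that for every n, the Kuratowski pair (f(n+1), b(n)) is a member of f(n); i.e., there is no infinite chain of function graphs each contained in the domain of its predecessor. -/

import Mathlib

private lemma no_mem_descent (g : ℕ → ZFSet) (hd : ∀ k, g (k + 1) ∈ g k) : False := by
  have key : ∀ x : ZFSet, ∀ k, g k ≠ x := fun x =>
    ZFSet.mem_wf.induction
      (C := fun x => ∀ k, g k ≠ x)
      x
      (fun x ih k hk => ih (g (k + 1)) (hk ▸ hd k) (k + 1) rfl)
  exact key (g 0) 0 rfl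

theorem no_descending_graph_chain :
    ¬ ∃ (f b : ℕ → ZFSet), ∀ n : ℕ, ZFSet.pair (f (n + 1)) (b n) ∈ f n := by
  rintro ⟨f, b, h⟩
  set g : ℕ → ZFSet := fun k =>
    match k % 3, k / 3 with
    | 0, n => f n
    | 1, n => ZFSet.pair (f (n + 1)) (b n)
    | _, n => {f (n + 1)}
    with hg
  have g0 : ∀ n, g (3 * n) = f n := fun n => by
    simp only [hg]; rw [show (3 * n) % 3 = 0 by omega, show (3 * n) / 3 = n by omega]; rfl
  have g1 : ∀ n, g (3 * n + 1) = ZFSet.pair (f (n + 1)) (b n) := fun n => by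
    simp only [hg]; rw [show (3 * n + 1) % 3 = 1 by omega, show (3 * n + 1) / 3 = n by omega]; rfl
  have g2 : ∀ n, g (3 * n + 2) = {f (n + 1)} := fun n => by
    simp only [hg]; rw [show (3 * n + 2) % 3 = 2 by omega, show (3 * n + 2) / 3 = n by omega]; rfl
  apply no_mem_descent g
  intro k
  obtain ⟨n, r, hr, hk⟩ : ∃ n r, r < 3 ∧ k = 3 * n + r :=
    ⟨k / 3, k % 3, Nat.mod_lt _ (by norm_num), by omega⟩
  interval_cases r <;> subst hk
  · rw [show 3 * n + 0 = 3 * n from rfl, show 3 * n + 1 = 3 * n + 1 from rfl, g0, g1]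
    exact h n
  · rw [g1, g2]
    simp [ZFSet.pair]
  · rw [show 3 * n + 2 + 1 = 3 * (n + 1) by ring, g2, g0]
    simp
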